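/- Let ψ be convex with ψ(0)=ψ(1)=0 and define ψ^{(q)}(r) = ψ(qr) − rψ(q). For χ ≥ 0 let Assumption B^{(q)}(χ) be: there exists ε > 0 with ψ(q(1+ε)) < +∞ and ψ^{(q)}(1+ε) < ε(1+χ). Then for 0 < q₁ < q₂ and any χ ≥ 0, B^{(q₂)}(χ) implies B^{(q₁)}(χ); and for q > 0 and 0 < χ₁ < χ₂, B^{(q)}(0) implies B^{(q)}(χ₁), which implies B^{(q)}(χ₂). -/

import Mathlib

open EReal

/-- Assumption `B^{(q)}(χ)`: there is `ε > 0` with `ψ (q*(1+ε)) < ∞` and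
`ψ^{(q)}(1+ε) = ψ (q*(1+ε)) - (1+ε) ψ(q) < ε (1+χ)`, written additively to avoid
`EReal` subtraction. -/
def AssumptionB (ψ : ℝ → EReal) (q χ : ℝ) : Prop :=
  ∃ ε : ℝ, 0 < ε ∧ ψ (q * (1 + ε)) < ⊤ ∧
    ψ (q * (1 + ε)) < ((ε * (1 + χ) : ℝ) : EReal) + ((1 + ε : ℝ) : EReal) * ψ q

lemma psi_ne_bot (ψ : ℝ → EReal)
    (hconv : ∀ x y : ℝ, 0 ≤ x → 0 ≤ y → ∀ t : ℝ, 0 ≤ t → t ≤ 1 →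
      ψ (t * x + (1 - t) * y) ≤ (t : EReal) * ψ x + ((1 - t : ℝ) : EReal) * ψ y)
    (h0 : ψ 0 = 0) (h1 : ψ 1 = 0) {x : ℝ} (hx : 0 < x) : ψ x ≠ ⊥ := by
  intro hb
  rcases lt_trichotomy x 1 with h | h | h
  · have h2x : (0:ℝ) < 2 - x := by linarith
    have ht0 : 0 < 1/(2-x) := by positivity
    have ht1 : 1/(2-x) ≤ 1 := by rw [div_le_one h2x]; linarith
    have key := hconv x 2 hx.le (by norm_num) (1/(2-x)) ht0.le ht1
    have e : (1/(2-x)) * x + (1 - 1/(2-x)) * 2 = 1 := by field_simp; ring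
    rw [e, h1, hb, EReal.coe_mul_bot_of_pos ht0, EReal.bot_add] at key
    simp at key
  · rw [h, h1] at hb; exact EReal.zero_ne_bot hb
  · have hx0 : (0:ℝ) < x := by linarith
    have hinv : (0:ℝ) < 1/x := by positivity
    have ht0 : 0 ≤ 1 - 1/x := by
      have : 1/x ≤ 1 := by rw [div_le_one hx0]; linarith
      linarith
    have ht1 : 1 - 1/x ≤ 1 := by linarith
    have key := hconv 0 x le_rfl hx0.le (1 - 1/x) ht0 ht1
    have e : (1 - 1/x) * 0 + (1 - (1 - 1/x)) * x = 1 := by field_simp; ring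
    have hpos : (0:ℝ) < 1 - (1 - 1/x) := by linarith
    rw [e, h1, hb, h0, mul_zero, EReal.coe_mul_bot_of_pos hpos, zero_add] at key
    simp at key

lemma psi_lt_top_of_lt (ψ : ℝ → EReal)
    (hconv : ∀ x y : ℝ, 0 ≤ x → 0 ≤ y → ∀ t : ℝ, 0 ≤ t → t ≤ 1 →
      ψ (t * x + (1 - t) * y) ≤ (t : EReal) * ψ x + ((1 - t : ℝ) : EReal) * ψ y)
    (h0 : ψ 0 = 0) (h1 : ψ 1 = 0) {x z : ℝ} (hx : 0 < x) (hxz : x < z) (hz : ψ z < ⊤) :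
    ψ x < ⊤ := by
  rcases le_or_gt x 1 with h | h
  · have key := hconv 1 0 zero_le_one le_rfl x hx.le h
    have e : x * 1 + (1 - x) * 0 = x := by ring
    rw [e, h0, h1, mul_zero, mul_zero, add_zero] at key
    exact lt_of_le_of_lt key (by norm_num)
  · have hz1 : (1:ℝ) < z := lt_trans h hxz
    have hzd : (0:ℝ) < z - 1 := by linarith
    set t : ℝ := (z - x)/(z - 1) with ht
    have ht0 : 0 ≤ t := by rw [ht]; apply _root_.div_nonneg <;> linarith
    have ht1 : t ≤ 1 := by rw [ht, div_le_one hzd]; linarith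
    have key := hconv 1 z zero_le_one (by linarith) t ht0 ht1
    have e : t * 1 + (1 - t) * z = x := by rw [ht]; field_simp; ring
    rw [e, h1, mul_zero, zero_add] at key
    obtain ⟨c, hc⟩ : ∃ c : ℝ, (c : EReal) = ψ z :=
      ⟨(ψ z).toReal, EReal.coe_toReal hz.ne (psi_ne_bot ψ hconv h0 h1 (by linarith))⟩
    rw [← hc] at key
    exact lt_of_le_of_lt key (lt_of_le_of_lt (by norm_cast) (EReal.coe_lt_top ((1-t)*c)))

/-- Monotonicity of Assumption `B^{(q)}(χ)`: for `0 < q₁ < q₂` and `χ ≥ 0`,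
`B^{(q₂)}(χ)` implies `B^{(q₁)}(χ)`; and for `q > 0` and `0 < χ₁ < χ₂`, `B^{(q)}(0)`
implies `B^{(q)}(χ₁)`, which implies `B^{(q)}(χ₂)`. -/
theorem assumptionB_monotone (ψ : ℝ → EReal)
    (hconv : ∀ x y : ℝ, 0 ≤ x → 0 ≤ y → ∀ t : ℝ, 0 ≤ t → t ≤ 1 →
      ψ (t * x + (1 - t) * y) ≤ (t : EReal) * ψ x + ((1 - t : ℝ) : EReal) * ψ y)
    (h0 : ψ 0 = 0) (h1 : ψ 1 = 0) :
    (∀ q₁ q₂ χ : ℝ, 0 < q₁ → q₁ < q₂ → 0 ≤ χ →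
        AssumptionB ψ q₂ χ → AssumptionB ψ q₁ χ) ∧
      (∀ q χ₁ χ₂ : ℝ, 0 < q → 0 < χ₁ → χ₁ < χ₂ →
        (AssumptionB ψ q 0 → AssumptionB ψ q χ₁) ∧
          (AssumptionB ψ q χ₁ → AssumptionB ψ q χ₂)) := by
  constructor
  · rintro q₁ q₂ χ hq₁ hq₁₂ hχ ⟨ε, hε, hfin, hlt⟩
    have hq₂ : 0 < q₂ := lt_trans hq₁ hq₁₂
    have hq2r : q₂ < q₂ * (1 + ε) := by nlinarith
    have hq1lt : q₁ < q₂ * (1 + ε) := lt_trans hq₁₂ hq2r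
    have hD : (0:ℝ) < q₂ * (1 + ε) - q₁ := by linarith
    -- finiteness / realness of the three values
    have hfin1 : ψ q₁ < ⊤ := psi_lt_top_of_lt ψ hconv h0 h1 hq₁ hq1lt hfin
    have hfin2 : ψ q₂ < ⊤ := psi_lt_top_of_lt ψ hconv h0 h1 hq₂ hq2r hfin
    obtain ⟨a, ha⟩ : ∃ a : ℝ, (a : EReal) = ψ q₁ :=
      ⟨(ψ q₁).toReal, EReal.coe_toReal hfin1.ne (psi_ne_bot ψ hconv h0 h1 hq₁)⟩
    obtain ⟨b, hb⟩ : ∃ b : ℝ, (b : EReal) = ψ q₂ :=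
      ⟨(ψ q₂).toReal, EReal.coe_toReal hfin2.ne (psi_ne_bot ψ hconv h0 h1 hq₂)⟩
    obtain ⟨d, hd⟩ : ∃ d : ℝ, (d : EReal) = ψ (q₂ * (1 + ε)) :=
      ⟨(ψ (q₂ * (1 + ε))).toReal, EReal.coe_toReal hfin.ne
        (psi_ne_bot ψ hconv h0 h1 (by positivity))⟩
    -- convexity at q₁ * (1+ε)
    set α : ℝ := (1 + ε) * (q₂ - q₁) / (q₂ * (1 + ε) - q₁) with hα
    have hα0 : 0 ≤ α := by rw [hα]; apply _root_.div_nonneg <;> nlinarith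
    have hα1 : α ≤ 1 := by rw [hα, div_le_one hD]; nlinarith
    have key1 := hconv q₁ (q₂ * (1 + ε)) hq₁.le (by positivity) α hα0 hα1
    have e1 : α * q₁ + (1 - α) * (q₂ * (1 + ε)) = q₁ * (1 + ε) := by
      rw [hα, div_mul_eq_mul_div, one_sub_div hD.ne', div_mul_eq_mul_div, ← add_div, div_eq_iff hD.ne']; ring
    rw [e1, ← ha, ← hd] at key1
    have key1' : ψ (q₁ * (1 + ε)) ≤ ((α * a + (1 - α) * d : ℝ) : EReal) := by
      refine le_trans key1 (le_of_eq ?_); norm_cast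
    -- convexity at q₂
    set β : ℝ := q₂ * ε / (q₂ * (1 + ε) - q₁) with hβ
    have hβ0 : 0 ≤ β := by rw [hβ]; apply _root_.div_nonneg <;> nlinarith
    have hβ1 : β ≤ 1 := by rw [hβ, div_le_one hD]; nlinarith
    have key2 := hconv q₁ (q₂ * (1 + ε)) hq₁.le (by positivity) β hβ0 hβ1
    have e2 : β * q₁ + (1 - β) * (q₂ * (1 + ε)) = q₂ := by
      rw [hβ]; field_simp [hD.ne']; first | ring1 | (ring_nf; tauto)
    rw [e2, ← ha, ← hb, ← hd] at key2
    have key2' : b ≤ β * a + (1 - β) * d := by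
      have : ((b:ℝ) : EReal) ≤ ((β * a + (1 - β) * d : ℝ) : EReal) := by
        refine le_trans key2 (le_of_eq ?_); norm_cast
      exact_mod_cast this
    -- hypothesis as a real inequality
    have hlt' : d < ε * (1 + χ) + (1 + ε) * b := by
      rw [← hb, ← hd] at hlt
      have : ((d:ℝ) : EReal) < ((ε * (1 + χ) + (1 + ε) * b : ℝ) : EReal) := by
        refine lt_of_lt_of_le hlt (le_of_eq ?_); norm_cast
      exact_mod_cast this
    -- the real inequality
    have hgoal : α * a + (1 - α) * d < ε * (1 + χ) + (1 + ε) * a := by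
      have eL : (q₂ * (1 + ε) - q₁) * (α * a + (1 - α) * d)
          = (1 + ε) * (q₂ - q₁) * a + ε * q₁ * d := by
        rw [hα]; field_simp [hD.ne']; first | ring1 | (ring_nf; tauto)
      have h5 : (q₂ * (1 + ε) - q₁) * b ≤ q₂ * ε * a + (q₂ - q₁) * d := by
        have h := mul_le_mul_of_nonneg_left key2' hD.le
        have e : (q₂ * (1 + ε) - q₁) * (β * a + (1 - β) * d)
            = q₂ * ε * a + (q₂ - q₁) * d := by
          rw [hβ]; field_simp [hD.ne']; first | ring1 | (ring_nf; tauto)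
        linarith [h, e.ge, e.le]
      have h6 := mul_lt_mul_of_pos_left hlt' hD
      have h7 := mul_le_mul_of_nonneg_left h5 (by positivity : (0:ℝ) ≤ 1 + ε)
      have hmul : (q₂ * (1 + ε) - q₁) * (α * a + (1 - α) * d)
          < (q₂ * (1 + ε) - q₁) * (ε * (1 + χ) + (1 + ε) * a) := by
        rw [eL]; nlinarith [h6, h7]
      exact lt_of_mul_lt_mul_left hmul hD.le
    refine ⟨ε, hε, lt_of_le_of_lt key1' (EReal.coe_lt_top _), ?_⟩
    refine lt_of_le_of_lt key1' ?_
    rw [← ha]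
    calc ((α * a + (1 - α) * d : ℝ) : EReal)
        < ((ε * (1 + χ) + (1 + ε) * a : ℝ) : EReal) := by exact_mod_cast hgoal
      _ = ((ε * (1 + χ) : ℝ) : EReal) + ((1 + ε : ℝ) : EReal) * ((a:ℝ) : EReal) := by
          norm_cast
  · rintro q χ₁ χ₂ hq hχ₁ hχ₁₂
    constructor <;> rintro ⟨ε, hε, hfin, hlt⟩ <;>
      refine ⟨ε, hε, hfin, lt_of_lt_of_le hlt (add_le_add_left ?_ _)⟩ <;>
      · exact EReal.coe_le_coe_iff.2 (by nlinarith)
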